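/- Let f : A → A be a function such that f² = f ∘ f has no proper cycle and f has at most one fixed point. Then there exists a distributive lattice structure (A, ⊔, ⊓) on A such that f is a lattice anti-endomorphism of (A, ⊔, ⊓). -/

import Mathlib

/-- `f` has a cycle of length `n`: `n` distinct elements `x₀,…,x_{n-1}` with
`f(xᵢ) = x_{i+1}` (indices mod `n`). -/
def HasCycle {A : Type*} (f : A → A) (n : ℕ) : Prop :=
  ∃ x : Fin n → A, Function.Injective x ∧
    ∀ i : Fin n, f (x i) = x ⟨((i : ℕ) + 1) % n, Nat.mod_lt _ i.pos⟩

/-- `f` is a lattice anti-endomorphism. -/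
def IsLatAntiEndo {A : Type*} [Lattice A] (f : A → A) : Prop :=
  ∀ x y : A, f (x ⊔ y) = f x ⊓ f y ∧ f (x ⊓ y) = f x ⊔ f y

namespace ThmAux

variable {A : Type*} (f : A → A)

def com (x y : A) : Prop := ∃ m n : ℕ, f^[m] x = f^[n] y

def Per (x : A) : Prop := ∃ n, 0 < n ∧ f^[n] x = x

variable {f}

lemma com_refl (x : A) : com f x x := ⟨0, 0, rfl⟩

lemma com_symm {x y : A} (h : com f x y) : com f y x := by
  obtain ⟨m, n, h⟩ := h; exact ⟨n, m, h.symm⟩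

lemma iter_eq_of_eq {m n : ℕ} {x y : A} (h : f^[m] x = f^[n] y) (k : ℕ) :
    f^[k + m] x = f^[k + n] y := by
  rw [Function.iterate_add_apply, Function.iterate_add_apply, h]

lemma com_trans {x y z : A} (h1 : com f x y) (h2 : com f y z) : com f x z := by
  obtain ⟨m, n, h1⟩ := h1
  obtain ⟨p, q, h2⟩ := h2
  refine ⟨p + m, n + q, ?_⟩
  calc f^[p + m] x = f^[p + n] y := iter_eq_of_eq h1 p
  _ = f^[n + p] y := by rw [add_comm]
  _ = f^[n + q] z := iter_eq_of_eq h2 n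

lemma com_f_self (x : A) : com f x (f x) := ⟨1, 0, by simp⟩

lemma com_f {x y : A} (h : com f x y) : com f (f x) y :=
  com_trans (com_symm (com_f_self x)) h

/-- key lemma: every periodic point has period dividing 2 -/
lemma per_two (hcyc : ∀ n : ℕ, 2 ≤ n → ¬ HasCycle (f ∘ f) n) {x : A}
    (hx : Per f x) : f^[2] x = x := by
  classical
  obtain ⟨n, hn, hnx⟩ := hx
  set S : Set ℕ := {k | 0 < k ∧ f^[k] x = x} with hS
  have hne : S.Nonempty := ⟨n, hn, hnx⟩
  set N := sInf S with hN
  obtain ⟨hNpos, hNx⟩ : 0 < N ∧ f^[N] x = x := Nat.sInf_mem hne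
  -- multiples
  have hmul : ∀ k, f^[k * N] x = x := by
    intro k; induction k with
    | zero => simp
    | succ k ih =>
      rw [Nat.succ_mul, Function.iterate_add_apply, hNx, ih]
  have hmod : ∀ a, f^[a % N] x = f^[a] x := by
    intro a
    conv_rhs => rw [← Nat.div_add_mod a N]
    rw [add_comm (N * (a / N)) (a % N), Function.iterate_add_apply,
      mul_comm N (a / N), hmul (a / N)]
  -- injectivity below N
  have haux : ∀ a b, a < N → b < N → f^[a] x = f^[b] x → a = b := by
    have key : ∀ a b, a < b → b < N → f^[a] x = f^[b] x → False := by
      intro a b hab hbN h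
      have h1 : f^[N - b + a] x = x := by
        have : f^[N - b] (f^[a] x) = f^[N - b] (f^[b] x) := by rw [h]
        rw [← Function.iterate_add_apply, ← Function.iterate_add_apply] at this
        rwa [Nat.sub_add_cancel hbN.le, hNx] at this
      have hlt : N - b + a < N := by omega
      have hpos : 0 < N - b + a := by omega
      have hnm : (N - b + a) ∉ S := Nat.notMem_of_lt_sInf (hN ▸ hlt)
      exact hnm ⟨hpos, h1⟩
    intro a b ha hb h
    rcases lt_trichotomy a b with h' | h' | h'
    · exact absurd h (fun h => key a b h' hb h)
    · exact h'
    · exact absurd h.symm (fun h => key b a h' ha h)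
  -- N ≤ 2
  by_cases hN2 : N ≤ 2
  · interval_cases N
    · have : f^[1] x = x := hNx
      simp only [Function.iterate_one] at this
      show f (f x) = x
      rw [this, this]
    · exact hNx
  · push_neg at hN2
    exfalso
    rcases Nat.even_or_odd N with ⟨m, hm⟩ | hodd
    · -- N = m + m, m ≥ 2
      have hm2 : 2 ≤ m := by omega
      apply hcyc m hm2
      refine ⟨fun i => f^[2 * (i : ℕ)] x, ?_, ?_⟩
      · intro i j hij
        have := haux _ _ (by omega : 2 * (i : ℕ) < N) (by omega : 2 * (j : ℕ) < N) hij
        exact Fin.ext (by omega)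
      · intro i
        show f (f (f^[2 * (i : ℕ)] x)) = f^[2 * (((i : ℕ) + 1) % m)] x
        have hL : f (f (f^[2 * (i : ℕ)] x)) = f^[2 * (i : ℕ) + 2] x := by
          rw [show 2 * (i : ℕ) + 2 = 2 * (i : ℕ) + 1 + 1 by ring]
          rw [Function.iterate_succ_apply', Function.iterate_succ_apply']
        rw [hL]
        have hle : (i : ℕ) + 1 ≤ m := i.isLt
        rcases eq_or_lt_of_le hle with he | hlt
        · rw [show ((i : ℕ) + 1) % m = 0 by rw [he]; exact Nat.mod_self m]
          rw [show 2 * (i : ℕ) + 2 = N by omega]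
          simpa using hNx
        · rw [Nat.mod_eq_of_lt hlt, show 2 * ((i : ℕ) + 1) = 2 * (i : ℕ) + 2 by ring]
    · -- N odd
      apply hcyc N (by omega)
      have hcop : Nat.gcd N 2 = 1 := Nat.coprime_two_right.mpr hodd
      refine ⟨fun i => f^[2 * (i : ℕ) % N] x, ?_, ?_⟩
      · intro i j hij
        have h1 := haux _ _ (Nat.mod_lt _ hNpos) (Nat.mod_lt _ hNpos) hij
        have h2 : 2 * (i : ℕ) ≡ 2 * (j : ℕ) [MOD N] := h1
        have h3 : (i : ℕ) ≡ (j : ℕ) [MOD N] := Nat.ModEq.cancel_left_of_coprime hcop h2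
        have := Nat.ModEq.eq_of_lt_of_lt h3 i.isLt j.isLt
        exact Fin.ext this
      · intro i
        show f (f (f^[2 * (i : ℕ) % N] x)) = f^[2 * (((i : ℕ) + 1) % N) % N] x
        have hL : f (f (f^[2 * (i : ℕ) % N] x)) = f^[2 * (i : ℕ) % N + 2] x := by
          rw [show 2 * (i : ℕ) % N + 2 = 2 * (i : ℕ) % N + 1 + 1 by ring]
          rw [Function.iterate_succ_apply', Function.iterate_succ_apply']
        rw [hL, ← hmod (2 * (i : ℕ) % N + 2)]
        congr 1
        have e1 : (2 * (i : ℕ) % N + 2) % N = (2 * (i : ℕ) + 2) % N := by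
          rw [Nat.mod_add_mod]
        have e2 : 2 * (((i : ℕ) + 1) % N) % N = (2 * ((i : ℕ) + 1)) % N :=
          (Nat.ModEq.mul_left 2 (Nat.mod_modEq _ _))
        rw [e1, e2]
        ring_nf

lemma odd_per_fix (hcyc : ∀ n : ℕ, 2 ≤ n → ¬ HasCycle (f ∘ f) n) {z : A} {d : ℕ}
    (hd : f^[d] z = z) (hodd : d % 2 = 1) : f z = z := by
  have h2 : f^[2] z = z := per_two hcyc ⟨d, by omega, hd⟩
  have heven : ∀ k, f^[2 * k] z = z := by
    intro k; induction k with
    | zero => simp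
    | succ k ih => rw [Nat.mul_succ, Function.iterate_add_apply, h2, ih]
  obtain ⟨k, hk⟩ : ∃ k, d = 2 * k + 1 := ⟨d / 2, by omega⟩
  calc f z = f (f^[2 * k] z) := by rw [heven]
  _ = f^[2 * k + 1] z := (Function.iterate_succ_apply' f _ z).symm
  _ = z := by rw [← hk, hd]

end ThmAux

section Chunk2

namespace ThmAux

variable {A : Type*} {f : A → A}

attribute [local instance] Classical.propDecidable

def EvenR (f : A → A) (x y : A) : Prop := ∃ m n : ℕ, f^[m] x = f^[n] y ∧ m % 2 = n % 2
def OddR (f : A → A) (x y : A) : Prop := ∃ m n : ℕ, f^[m] x = f^[n] y ∧ m % 2 ≠ n % 2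
def UC (f : A → A) (x : A) : Prop := ∃ v, f v = v ∧ com f x v
def Free (f : A → A) (x : A) : Prop := ¬ ∃ z, Per f z ∧ com f x z

lemma fix_iter {z : A} (hz : f z = z) (n : ℕ) : f^[n] z = z := by
  induction n with
  | zero => rfl
  | succ n ih => rw [Function.iterate_succ_apply', ih, hz]

lemma combineE {x y w : A} {m n p q : ℕ} (h1 : f^[m] x = f^[n] w)
    (h2 : f^[p] y = f^[q] w) : f^[q + m] x = f^[n + p] y := by
  calc f^[q + m] x = f^[q + n] w := iter_eq_of_eq h1 q
  _ = f^[n + q] w := by rw [add_comm]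
  _ = f^[n + p] y := (iter_eq_of_eq h2 n).symm

lemma evenR_or_oddR {x y : A} (h : com f x y) : EvenR f x y ∨ OddR f x y := by
  obtain ⟨m, n, h⟩ := h
  by_cases hp : m % 2 = n % 2
  · exact Or.inl ⟨m, n, h, hp⟩
  · exact Or.inr ⟨m, n, h, hp⟩

lemma self_per {x : A} {s t : ℕ} (h : f^[s] x = f^[t] x) (hst : s ≠ t) :
    ∃ z, Per f z ∧ com f x z := by
  have key : ∀ s t : ℕ, s < t → f^[s] x = f^[t] x → ∃ z, Per f z ∧ com f x z := by
    intro s t hlt h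
    refine ⟨f^[s] x, ⟨t - s, by omega, ?_⟩, ⟨s, 0, rfl⟩⟩
    rw [← Function.iterate_add_apply, show t - s + s = t by omega, ← h]
  rcases lt_or_gt_of_ne hst with h' | h'
  · exact key s t h' h
  · exact key t s h' h.symm

lemma self_odd_UC (hcyc : ∀ n : ℕ, 2 ≤ n → ¬ HasCycle (f ∘ f) n) {x : A} {s t : ℕ}
    (h : f^[s] x = f^[t] x) (hst : s % 2 ≠ t % 2) : UC f x := by
  have key : ∀ s t : ℕ, s < t → s % 2 ≠ t % 2 → f^[s] x = f^[t] x → UC f x := by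
    intro s t hlt hp h
    have hper : f^[t - s] (f^[s] x) = f^[s] x := by
      rw [← Function.iterate_add_apply, show t - s + s = t by omega, ← h]
    have hfz : f (f^[s] x) = f^[s] x := odd_per_fix hcyc hper (by omega)
    exact ⟨f^[s] x, hfz, ⟨s, 0, rfl⟩⟩
  rcases lt_or_gt_of_ne (show s ≠ t by omega) with h' | h'
  · exact key s t h' hst h
  · exact key t s h' (by omega) h.symm

lemma even_odd_UC (hcyc : ∀ n : ℕ, 2 ≤ n → ¬ HasCycle (f ∘ f) n) {x y : A}
    (he : EvenR f x y) (ho : OddR f x y) : UC f x := by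
  obtain ⟨m, n, h1, hp1⟩ := he
  obtain ⟨p, q, h2, hp2⟩ := ho
  exact self_odd_UC hcyc (combineE h1 h2) (by omega)

lemma EE {x y w : A} (h1 : EvenR f x w) (h2 : EvenR f y w) : EvenR f x y := by
  obtain ⟨m, n, h1, hp1⟩ := h1; obtain ⟨p, q, h2, hp2⟩ := h2
  exact ⟨q + m, n + p, combineE h1 h2, by omega⟩

lemma OO {x y w : A} (h1 : OddR f x w) (h2 : OddR f y w) : EvenR f x y := by
  obtain ⟨m, n, h1, hp1⟩ := h1; obtain ⟨p, q, h2, hp2⟩ := h2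
  exact ⟨q + m, n + p, combineE h1 h2, by omega⟩

lemma EO {x y w : A} (h1 : EvenR f x w) (h2 : OddR f y w) : OddR f x y := by
  obtain ⟨m, n, h1, hp1⟩ := h1; obtain ⟨p, q, h2, hp2⟩ := h2
  exact ⟨q + m, n + p, combineE h1 h2, by omega⟩

lemma iter_f_eq {m : ℕ} (x : A) : f^[m] (f x) = f^[m + 1] x :=
  (Function.iterate_succ_apply f m x).symm

lemma oddR_f {x w : A} (h : OddR f x w) : EvenR f (f x) w := by
  obtain ⟨m, n, h, hp⟩ := h
  refine ⟨m, n + 1, ?_, by omega⟩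
  rw [iter_f_eq]
  calc f^[m + 1] x = f (f^[m] x) := Function.iterate_succ_apply' f m x
  _ = f (f^[n] w) := by rw [h]
  _ = f^[n + 1] w := (Function.iterate_succ_apply' f n w).symm

lemma evenR_f {x w : A} (h : EvenR f x w) : OddR f (f x) w := by
  obtain ⟨m, n, h, hp⟩ := h
  refine ⟨m, n + 1, ?_, by omega⟩
  rw [iter_f_eq]
  calc f^[m + 1] x = f (f^[m] x) := Function.iterate_succ_apply' f m x
  _ = f (f^[n] w) := by rw [h]
  _ = f^[n + 1] w := (Function.iterate_succ_apply' f n w).symm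

/-- base point of the component -/
noncomputable def bpt (f : A → A) (x : A) : A :=
  (show ∃ y, com f x y from ⟨x, com_refl x⟩).choose

lemma com_bpt (f : A → A) (x : A) : com f x (bpt f x) :=
  (show ∃ y, com f x y from ⟨x, com_refl x⟩).choose_spec

private lemma choose_congr {p q : A → Prop} (h1 : ∃ y, p y) (h2 : ∃ y, q y)
    (h : p = q) : h1.choose = h2.choose := by subst h; rfl

lemma bpt_eq {x y : A} (h : com f x y) : bpt f x = bpt f y := by
  apply choose_congr
  funext z
  exact propext ⟨fun hz => com_trans (com_symm h) hz, fun hz => com_trans h hz⟩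

lemma bpt_f (x : A) : bpt f (f x) = bpt f x := bpt_eq (com_symm (com_f_self x))

lemma UC_com {x y : A} (h : com f x y) (hx : UC f x) : UC f y := by
  obtain ⟨v, hv, hc⟩ := hx
  exact ⟨v, hv, com_trans (com_symm h) hc⟩

lemma free_com {x y : A} (h : com f x y) (hx : Free f x) : Free f y := by
  rintro ⟨z, hz, hc⟩
  exact hx ⟨z, hz, com_trans h hc⟩

section NE
variable [Nonempty A]

noncomputable def ufix (f : A → A) : A :=
  if h : ∃ v, f v = v then h.choose else Classical.arbitrary A

lemma ufix_fix (h : ∃ v, f v = v) : f (ufix f) = ufix f := by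
  rw [ufix, dif_pos h]; exact h.choose_spec

lemma eq_ufix (hfix : ∀ u v : A, f u = u → f v = v → u = v) {z : A} (hz : f z = z) :
    z = ufix f := hfix z (ufix f) hz (ufix_fix ⟨z, hz⟩)

noncomputable def dU (f : A → A) (x : A) : ℕ := sInf {n | f^[n] x = ufix f}

lemma reach_u (hfix : ∀ u v : A, f u = u → f v = v → u = v) {x : A} (h : UC f x) :
    ∃ n, f^[n] x = ufix f := by
  obtain ⟨v, hv, m, n, hc⟩ := h
  exact ⟨m, by rw [hc, fix_iter hv, eq_ufix hfix hv]⟩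

/-- helper about shifted sInf -/
lemma sInf_shift {S T : Set ℕ} (hST : ∀ k, k ∈ T ↔ k + 1 ∈ S) (h0 : 0 ∉ S)
    (hne : S.Nonempty) : T.Nonempty ∧ sInf T = sInf S - 1 := by
  obtain ⟨n, hn⟩ := hne
  have hn0 : n ≠ 0 := by rintro rfl; exact h0 hn
  have hTne : T.Nonempty := ⟨n - 1, by
    rw [hST, show n - 1 + 1 = n by omega]; exact hn⟩
  constructor
  · exact hTne
  · have hS : sInf S ∈ S := Nat.sInf_mem ⟨n, hn⟩
    have hSpos : sInf S ≠ 0 := by rintro h; rw [h] at hS; exact h0 hS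
    have h1 : sInf T ≤ sInf S - 1 := by
      apply Nat.sInf_le
      rw [hST, show sInf S - 1 + 1 = sInf S by omega]
      exact hS
    have h2 : sInf S ≤ sInf T + 1 := Nat.sInf_le ((hST _).mp (Nat.sInf_mem hTne))
    omega

lemma dU_spec (hfix : ∀ u v : A, f u = u → f v = v → u = v) {x : A} (h : UC f x) :
    f^[dU f x] x = ufix f := Nat.sInf_mem (reach_u hfix h)

lemma dU_ufix_ne (hfix : ∀ u v : A, f u = u → f v = v → u = v) {x : A}
    (hne : x ≠ ufix f) (h : UC f x) : 0 < dU f x := by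
  rcases Nat.eq_zero_or_pos (dU f x) with h0 | h1
  · exfalso; apply hne
    have := dU_spec hfix h; rwa [h0] at this
  · exact h1

lemma dU_f (hfix : ∀ u v : A, f u = u → f v = v → u = v) {x : A}
    (hne : x ≠ ufix f) (h : UC f x) : dU f (f x) = dU f x - 1 := by
  have h0 : (0 : ℕ) ∉ {n | f^[n] x = ufix f} := hne
  have := sInf_shift (S := {n | f^[n] x = ufix f}) (T := {n | f^[n] (f x) = ufix f})
    (fun k => by simp only [Set.mem_setOf_eq, iter_f_eq]) h0 (reach_u hfix h)
  exact this.2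

end NE

/-- rho -/
noncomputable def rho (f : A → A) (x : A) : ℤ :=
  if Free f x then
    (((com_bpt f x).choose_spec.choose : ℤ) - ((com_bpt f x).choose : ℤ)) else 0

lemma rho_unique (hfree : Free f x) {m n p q : ℕ} (h1 : f^[m] x = f^[n] (bpt f x))
    (h2 : f^[p] x = f^[q] (bpt f x)) : (n : ℤ) - m = (q : ℤ) - p := by
  have h3 : f^[q + m] x = f^[n + p] x := combineE h1 h2
  by_contra hne
  exact hfree (self_per h3 (by omega))

lemma rho_eq (hfree : Free f x) {m n : ℕ} (h : f^[m] x = f^[n] (bpt f x)) :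
    rho f x = (n : ℤ) - m := by
  rw [rho, if_pos hfree]
  exact rho_unique hfree (com_bpt f x).choose_spec.choose_spec h

lemma rho_nonfree (h : ¬ Free f x) : rho f x = 0 := by rw [rho, if_neg h]

lemma rho_f (hfree : Free f x) : rho f (f x) = rho f x + 1 := by
  have hfree' : Free f (f x) := free_com (com_f_self x) hfree
  obtain ⟨m, n, h⟩ := com_bpt f x
  have h2 : f^[m] (f x) = f^[n + 1] (bpt f (f x)) := by
    rw [bpt_f, iter_f_eq]
    calc f^[m + 1] x = f (f^[m] x) := Function.iterate_succ_apply' f m x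
    _ = f (f^[n] (bpt f x)) := by rw [h]
    _ = f^[n + 1] (bpt f x) := (Function.iterate_succ_apply' f n (bpt f x)).symm
  rw [rho_eq hfree' h2, rho_eq hfree h]
  push_cast; ring

section NE2
variable [Nonempty A]

/-- side of an element -/
noncomputable def side (f : A → A) (x : A) : Bool :=
  if UC f x then decide (dU f x % 2 = 1) else decide (OddR f x (bpt f x))

lemma decide_not_iff {p q : Prop} [Decidable p] [Decidable q] (h : p ↔ ¬ q) :
    decide p = ! decide q := by
  by_cases hq : q <;> simp [hq, h.mpr, h]

lemma side_fix (hfix : ∀ u v : A, f u = u → f v = v → u = v) {x : A} (hx : f x = x) :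
    side f x = false := by
  have hUC : UC f x := ⟨x, hx, com_refl x⟩
  rw [side, if_pos hUC]
  have : dU f x = 0 := by
    apply Nat.sInf_eq_zero.mpr
    left
    show f^[0] x = ufix f
    exact eq_ufix hfix hx
  simp [this]

lemma side_f (hcyc : ∀ n : ℕ, 2 ≤ n → ¬ HasCycle (f ∘ f) n)
    (hfix : ∀ u v : A, f u = u → f v = v → u = v) {x : A} (hx : ¬ f x = x) :
    side f (f x) = ! side f x := by
  by_cases hUC : UC f x
  · have hUC' : UC f (f x) := UC_com (com_f_self x) hUC
    have hne : x ≠ ufix f := by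
      rintro rfl; exact hx (ufix_fix (hUC.imp fun v hv => hv.1))
    have hd : 0 < dU f x := dU_ufix_ne hfix hne hUC
    rw [side, side, if_pos hUC, if_pos hUC', dU_f hfix hne hUC]
    exact decide_not_iff (by omega)
  · have hUC' : ¬ UC f (f x) := fun h => hUC (UC_com (com_symm (com_f_self x)) h)
    rw [side, side, if_neg hUC, if_neg hUC', bpt_f]
    apply decide_not_iff
    constructor
    · intro ho hox
      exact hUC' (even_odd_UC hcyc (oddR_f hox) ho)
    · intro hno
      have he : EvenR f x (bpt f x) := (evenR_or_oddR (com_bpt f x)).resolve_right hno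
      exact evenR_f he

end NE2

end ThmAux
end Chunk2

section Chunk3
namespace ThmAux

variable {A : Type*} {f : A → A}

attribute [local instance] Classical.propDecidable

noncomputable def mN (f : A → A) (x y : A) : ℕ := sInf {N | f^[N] x = f^[N] y}

lemma mN_symm (f : A → A) (x y : A) : mN f x y = mN f y x := by
  unfold mN; congr 1; ext k; exact eq_comm

lemma orbit_two {z : A} (h2 : f^[2] z = z) (n : ℕ) : f^[n] z = z ∨ f^[n] z = f z := by
  induction n with
  | zero => exact Or.inl rfl
  | succ n ih =>
    rcases ih with h | h
    · rw [Function.iterate_succ_apply', h]; exact Or.inr rfl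
    · rw [Function.iterate_succ_apply', h]; exact Or.inl h2

lemma iter_two (z : A) : f^[2] z = f (f z) := by
  rw [show (2 : ℕ) = 1 + 1 from rfl, Function.iterate_succ_apply', Function.iterate_one]

lemma twocyc_notUC {x z : A} (h2 : f^[2] z = z) (hz : f z ≠ z) (hc : com f x z) :
    ¬ UC f x := by
  have hffz : f (f z) = z := (iter_two z).symm.trans h2
  rintro ⟨v, hv, hcv⟩
  obtain ⟨m, n, h⟩ := com_trans (com_symm hc) hcv
  rw [fix_iter hv] at h
  rcases orbit_two h2 m with h' | h'
  · rw [h'] at h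
    apply hz; rw [h]; exact hv
  · rw [h'] at h
    apply hz
    have h3 : f (f z) = f z := by rw [h]; exact hv
    exact (hffz.symm.trans h3).symm

lemma merge_ex [Nonempty A] (hcyc : ∀ n : ℕ, 2 ≤ n → ¬ HasCycle (f ∘ f) n)
    (hfix : ∀ u v : A, f u = u → f v = v → u = v) {x y : A}
    (hcom : com f x y) (hside : side f x = side f y) (hrho : rho f x = rho f y) :
    ∃ N, f^[N] x = f^[N] y := by
  by_cases hfr : Free f x
  · obtain ⟨m, n, h1⟩ := com_bpt f x
    have hfry : Free f y := free_com hcom hfr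
    obtain ⟨p, q, h2⟩ := com_bpt f y
    have hr1 : rho f x = (n : ℤ) - m := rho_eq hfr h1
    have hr2 : rho f y = (q : ℤ) - p := rho_eq hfry h2
    have h2' : f^[p] y = f^[q] (bpt f x) := by rw [bpt_eq hcom]; exact h2
    have h3 : f^[q + m] x = f^[n + p] y := combineE h1 h2'
    refine ⟨q + m, ?_⟩
    conv_rhs => rw [show q + m = n + p by omega]
    exact h3
  · obtain ⟨z, hper, hcxz⟩ := (show ∃ z, Per f z ∧ com f x z from not_not.mp hfr)
    have h2 := per_two hcyc hper
    by_cases hz : f z = z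
    · have hux : UC f x := ⟨z, hz, hcxz⟩
      have huy : UC f y := UC_com hcom hux
      obtain ⟨dx, hdx⟩ := reach_u hfix hux
      obtain ⟨dy, hdy⟩ := reach_u hfix huy
      refine ⟨dy + dx, ?_⟩
      rw [Function.iterate_add_apply, hdx, fix_iter (ufix_fix ⟨z, hz⟩)]
      rw [add_comm, Function.iterate_add_apply, hdy, fix_iter (ufix_fix ⟨z, hz⟩)]
    · -- two-cycle component
      have hcyz := com_trans (com_symm hcom) hcxz
      obtain ⟨mx, nx, hx1⟩ := hcxz
      obtain ⟨my, ny, hy1⟩ := hcyz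
      have hx2 : f^[mx] x = z ∨ f^[mx] x = f z := by
        rcases orbit_two h2 nx with h | h <;> rw [h] at hx1
        · exact Or.inl hx1
        · exact Or.inr hx1
      have hy2 : f^[my] y = z ∨ f^[my] y = f z := by
        rcases orbit_two h2 ny with h | h <;> rw [h] at hy1
        · exact Or.inl hy1
        · exact Or.inr hy1
      set N := my + mx with hN
      have hax : f^[N] x = z ∨ f^[N] x = f z := by
        rw [hN, Function.iterate_add_apply]
        rcases hx2 with h | h <;> rw [h]
        · exact orbit_two h2 my
        · rw [iter_f_eq]; exact orbit_two h2 (my + 1)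
      have hay : f^[N] y = z ∨ f^[N] y = f z := by
        rw [hN, add_comm, Function.iterate_add_apply]
        rcases hy2 with h | h <;> rw [h]
        · exact orbit_two h2 mx
        · rw [iter_f_eq]; exact orbit_two h2 (mx + 1)
      by_cases heq : f^[N] x = f^[N] y
      · exact ⟨N, heq⟩
      · exfalso
        have hffz : f (f z) = z := (iter_two z).symm.trans h2
        have hstep : f^[N] y = f (f^[N] x) := by
          rcases hax with h1 | h1 <;> rcases hay with h2 | h2
          · exact absurd (h1.trans h2.symm) heq
          · rw [h1, h2]
          · rw [h1, h2]; exact hffz.symm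
          · exact absurd (h1.trans h2.symm) heq
        have hodd : OddR f x y := by
          refine ⟨N + 1, N, ?_, by omega⟩
          rw [Function.iterate_succ_apply' f N x, ← hstep]
        have hnUCx : ¬ UC f x := twocyc_notUC h2 hz ⟨mx, nx, hx1⟩
        have hnUCy : ¬ UC f y :=
          twocyc_notUC h2 hz ⟨my, ny, hy1⟩
        have hbxy : bpt f x = bpt f y := bpt_eq hcom
        have heven : EvenR f x y := by
          rw [side, side, if_neg hnUCx, if_neg hnUCy, ← hbxy] at hside
          have hpq := decide_eq_decide.mp hside
          by_cases hox : OddR f x (bpt f x)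
          · exact OO hox (hpq.mp hox)
          · have hex : EvenR f x (bpt f x) :=
              (evenR_or_oddR (com_bpt f x)).resolve_right hox
            have hey : EvenR f y (bpt f x) := by
              have hoy : ¬ OddR f y (bpt f x) := fun h => hox (hpq.mpr h)
              have : com f y (bpt f x) := by
                rw [hbxy]; exact com_bpt f y
              exact (evenR_or_oddR this).resolve_right hoy
            exact EE hex hey
        exact hnUCx (even_odd_UC hcyc heven hodd)

section MNfacts

variable {x y : A}

lemma mN_mem (hm : ∃ N, f^[N] x = f^[N] y) :
    f^[mN f x y] x = f^[mN f x y] y := Nat.sInf_mem hm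

lemma mN_pos (hm : ∃ N, f^[N] x = f^[N] y) (hxy : x ≠ y) : 0 < mN f x y := by
  rcases Nat.eq_zero_or_pos (mN f x y) with h0 | h1
  · exfalso; apply hxy
    have := mN_mem hm; rwa [h0] at this
  · exact h1

lemma base_ne (hm : ∃ N, f^[N] x = f^[N] y) (hxy : x ≠ y) : f^[mN f x y - 1] x ≠ f^[mN f x y - 1] y := by
  intro h
  have hp := mN_pos hm hxy
  have hnm : mN f x y - 1 ∉ {N | f^[N] x = f^[N] y} :=
    Nat.notMem_of_lt_sInf (show mN f x y - 1 < mN f x y by omega)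
  exact hnm h

lemma mN_two (hm : ∃ N, f^[N] x = f^[N] y) (hxy : x ≠ y) (hfne : f x ≠ f y) :
    2 ≤ mN f x y := by
  have hp := mN_pos hm hxy
  rcases Nat.lt_or_ge (mN f x y) 2 with h | h
  · exfalso
    have h1 : mN f x y = 1 := by omega
    have := mN_mem hm
    rw [h1] at this
    exact hfne this
  · exact h

lemma mN_f (hm : ∃ N, f^[N] x = f^[N] y) (hxy : x ≠ y) (hfne : f x ≠ f y) :
    (∃ N, f^[N] (f x) = f^[N] (f y)) ∧ mN f (f x) (f y) = mN f x y - 1 := by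
  have h0 : (0 : ℕ) ∉ {N | f^[N] x = f^[N] y} := hxy
  exact sInf_shift (S := {N | f^[N] x = f^[N] y}) (T := {N | f^[N] (f x) = f^[N] (f y)})
    (fun k => by simp only [Set.mem_setOf_eq, iter_f_eq]) h0 hm

lemma base_f (hm : ∃ N, f^[N] x = f^[N] y) (hxy : x ≠ y) (hfne : f x ≠ f y) :
    f^[mN f (f x) (f y) - 1] (f x) = f^[mN f x y - 1] x ∧
    f^[mN f (f x) (f y) - 1] (f y) = f^[mN f x y - 1] y := by
  have h2 := mN_two hm hxy hfne
  have hf := (mN_f hm hxy hfne).2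
  constructor <;>
  · rw [hf, iter_f_eq, show mN f x y - 1 - 1 + 1 = mN f x y - 1 by omega]

end MNfacts

end ThmAux
end Chunk3

section Chunk4
namespace ThmAux

variable {A : Type*} {f : A → A}

attribute [local instance] Classical.propDecidable

/-- order on components: components with a fixed point are largest -/
def CompLt (f : A → A) (x y : A) : Prop :=
  (¬ UC f x ∧ UC f y) ∨ (¬ UC f x ∧ ¬ UC f y ∧ WellOrderingRel (bpt f x) (bpt f y))

def Klt (f : A → A) (x y : A) : Prop :=
  (¬ f x = x ∧ f y = y) ∨
  (¬ f x = x ∧ ¬ f y = y ∧ (CompLt f x y ∨ (bpt f x = bpt f y ∧ rho f x < rho f y)))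

def Keq (f : A → A) (x y : A) : Prop :=
  bpt f x = bpt f y ∧ rho f x = rho f y ∧ (f x = x ↔ f y = y)

/-- the well-order with the fixed point moved on top -/
def WRp (f : A → A) (a c : A) : Prop := ¬ f a = a ∧ (f c = c ∨ WellOrderingRel a c)

def Inner (f : A → A) (x y : A) : Prop :=
  x ≠ y ∧ WRp f (f^[mN f x y - 1] x) (f^[mN f x y - 1] y)

def SC (f : A → A) (x y : A) : Prop := Klt f x y ∨ (Keq f x y ∧ Inner f x y)

noncomputable def ltF (f : A → A) [Nonempty A] (x y : A) : Prop :=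
  (side f x = false ∧ side f y = true) ∨
  (side f x = false ∧ side f y = false ∧ SC f x y) ∨
  (side f x = true ∧ side f y = true ∧ SC f y x)

/- ### WRp lemmas -/

lemma wrp_ne {a b : A} (h : WRp f a b) : a ≠ b := by
  rintro rfl
  obtain ⟨h1, h2 | h2⟩ := h
  · exact h1 h2
  · exact irrefl_of WellOrderingRel a h2

lemma wrp_trans {a b c : A} (h1 : WRp f a b) (h2 : WRp f b c) : WRp f a c := by
  obtain ⟨ha, hb⟩ := h1
  obtain ⟨hb', hc⟩ := h2
  refine ⟨ha, ?_⟩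
  rcases hc with hc | hc
  · exact Or.inl hc
  · rcases hb with hb | hb
    · exact absurd hb hb'
    · exact Or.inr (trans_of WellOrderingRel hb hc)

lemma wrp_tri (hfix : ∀ u v : A, f u = u → f v = v → u = v) {a b : A} (hab : a ≠ b) :
    WRp f a b ∨ WRp f b a := by
  by_cases ha : f a = a
  · have hb : ¬ f b = b := fun hb => hab (hfix a b ha hb)
    exact Or.inr ⟨hb, Or.inl ha⟩
  · by_cases hb : f b = b
    · exact Or.inl ⟨ha, Or.inl hb⟩
    · rcases trichotomous_of WellOrderingRel a b with h | h | h
      · exact Or.inl ⟨ha, Or.inr h⟩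
      · exact absurd h hab
      · exact Or.inr ⟨hb, Or.inr h⟩

/- ### Keq lemmas -/

lemma keq_refl (x : A) : Keq f x x := ⟨rfl, rfl, Iff.rfl⟩

lemma keq_symm {x y : A} (h : Keq f x y) : Keq f y x := ⟨h.1.symm, h.2.1.symm, h.2.2.symm⟩

lemma keq_trans {x y z : A} (h1 : Keq f x y) (h2 : Keq f y z) : Keq f x z :=
  ⟨h1.1.trans h2.1, h1.2.1.trans h2.2.1, h1.2.2.trans h2.2.2⟩

lemma com_of_bpt_eq {x y : A} (h : bpt f x = bpt f y) : com f x y :=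
  com_trans (com_bpt f x) (h ▸ com_symm (com_bpt f y))

lemma keq_com {x y : A} (h : Keq f x y) : com f x y := com_of_bpt_eq h.1

lemma uc_iff_of_bpt {y z : A} (h : bpt f y = bpt f z) : UC f y ↔ UC f z :=
  ⟨UC_com (com_of_bpt_eq h), UC_com (com_symm (com_of_bpt_eq h))⟩

/- ### CompLt and Klt lemmas -/

lemma complt_trans {x y z : A} (h1 : CompLt f x y) (h2 : CompLt f y z) : CompLt f x z := by
  rcases h1 with ⟨ha, hb⟩ | ⟨ha, hb, hw⟩ <;> rcases h2 with ⟨hc, hd⟩ | ⟨hc, hd, hw'⟩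
  · exact absurd hb hc
  · exact absurd hb hc
  · exact Or.inl ⟨ha, hd⟩
  · exact Or.inr ⟨ha, hd, trans_of WellOrderingRel hw hw'⟩

lemma complt_congr_r {x y z : A} (h : bpt f y = bpt f z) :
    CompLt f x y ↔ CompLt f x z := by
  have huc := uc_iff_of_bpt (f := f) h
  unfold CompLt
  rw [h]
  tauto

lemma complt_congr_l {x y z : A} (h : bpt f y = bpt f z) :
    CompLt f y x ↔ CompLt f z x := by
  have huc := uc_iff_of_bpt (f := f) h
  unfold CompLt
  rw [h]
  tauto

lemma uc_uc_com (hfix : ∀ u v : A, f u = u → f v = v → u = v) {x y : A}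
    (hx : UC f x) (hy : UC f y) : com f x y := by
  obtain ⟨v, hv, hcv⟩ := hx
  obtain ⟨w, hw, hcw⟩ := hy
  rw [hfix v w hv hw] at hcv
  exact com_trans hcv (com_symm hcw)

lemma complt_tri (hfix : ∀ u v : A, f u = u → f v = v → u = v) (x y : A) :
    CompLt f x y ∨ CompLt f y x ∨ bpt f x = bpt f y := by
  by_cases hx : UC f x <;> by_cases hy : UC f y
  · exact Or.inr (Or.inr (bpt_eq (uc_uc_com hfix hx hy)))
  · exact Or.inr (Or.inl (Or.inl ⟨hy, hx⟩))
  · exact Or.inl (Or.inl ⟨hx, hy⟩)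
  · rcases trichotomous_of WellOrderingRel (bpt f x) (bpt f y) with h | h | h
    · exact Or.inl (Or.inr ⟨hx, hy, h⟩)
    · exact Or.inr (Or.inr h)
    · exact Or.inr (Or.inl (Or.inr ⟨hy, hx, h⟩))

lemma klt_trans {x y z : A} (h1 : Klt f x y) (h2 : Klt f y z) : Klt f x z := by
  rcases h1 with ⟨ha, hb⟩ | ⟨ha, hb, hs⟩ <;> rcases h2 with ⟨hc, hd⟩ | ⟨hc, hd, hs'⟩
  · exact absurd hb hc
  · exact absurd hb hc
  · exact Or.inl ⟨ha, hd⟩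
  · refine Or.inr ⟨ha, hd, ?_⟩
    rcases hs with hs | ⟨hbe, hr⟩ <;> rcases hs' with hs' | ⟨hbe', hr'⟩
    · exact Or.inl (complt_trans hs hs')
    · exact Or.inl ((complt_congr_r hbe').mp hs)
    · exact Or.inl ((complt_congr_l hbe).mpr hs')
    · exact Or.inr ⟨hbe.trans hbe', lt_trans hr hr'⟩

lemma klt_congr_r {x y z : A} (h : Keq f y z) : Klt f x y ↔ Klt f x z := by
  obtain ⟨hb, hr, hfx⟩ := h
  unfold Klt
  rw [hb, hr, complt_congr_r (f := f) hb]  -- handles rho and complt; fix (f y = y ↔ f z = z)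
  tauto

lemma klt_congr_l {x y z : A} (h : Keq f y z) : Klt f y x ↔ Klt f z x := by
  obtain ⟨hb, hr, hfx⟩ := h
  unfold Klt
  rw [hb, hr, complt_congr_l (f := f) hb]
  tauto

lemma klt_irrefl {x : A} (h : Klt f x x) : False := by
  rcases h with ⟨h1, h2⟩ | ⟨h1, h2, h | ⟨_, h⟩⟩
  · exact h1 h2
  · rcases h with ⟨h3, h4⟩ | ⟨h3, h4, h5⟩
    · exact h3 h4
    · exact irrefl_of WellOrderingRel _ h5
  · exact lt_irrefl _ h

lemma klt_tri (hfix : ∀ u v : A, f u = u → f v = v → u = v) (x y : A) :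
    Klt f x y ∨ Klt f y x ∨ Keq f x y := by
  by_cases hx : f x = x <;> by_cases hy : f y = y
  · have : x = y := hfix x y hx hy
    subst this
    exact Or.inr (Or.inr (keq_refl x))
  · exact Or.inr (Or.inl (Or.inl ⟨hy, hx⟩))
  · exact Or.inl (Or.inl ⟨hx, hy⟩)
  · rcases complt_tri hfix (f := f) x y with h | h | h
    · exact Or.inl (Or.inr ⟨hx, hy, Or.inl h⟩)
    · exact Or.inr (Or.inl (Or.inr ⟨hy, hx, Or.inl h⟩))
    · rcases lt_trichotomy (rho f x) (rho f y) with h' | h' | h'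
      · exact Or.inl (Or.inr ⟨hx, hy, Or.inr ⟨h, h'⟩⟩)
      · exact Or.inr (Or.inr ⟨h, h', iff_of_false hx hy⟩)
      · exact Or.inr (Or.inl (Or.inr ⟨hy, hx, Or.inr ⟨h.symm, h'⟩⟩))

/- ### Inner lemmas -/

lemma merge_after {x y : A} (hm : ∃ N, f^[N] x = f^[N] y) {k : ℕ}
    (hk : mN f x y ≤ k) : f^[k] x = f^[k] y := by
  have h := mN_mem hm
  rw [show k = (k - mN f x y) + mN f x y by omega, Function.iterate_add_apply,
    Function.iterate_add_apply, h]

lemma inner_tri (hfix : ∀ u v : A, f u = u → f v = v → u = v) {x y : A}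
    (hm : ∃ N, f^[N] x = f^[N] y) (hxy : x ≠ y) : Inner f x y ∨ Inner f y x := by
  rcases wrp_tri hfix (base_ne hm hxy) with h | h
  · exact Or.inl ⟨hxy, h⟩
  · right
    refine ⟨hxy.symm, ?_⟩
    rw [mN_symm f y x]
    exact h

lemma inner_asym {x y : A} (h1 : Inner f x y) (h2 : Inner f y x) : False := by
  obtain ⟨hne, hw1⟩ := h1
  obtain ⟨_, hw2⟩ := h2
  rw [mN_symm f y x] at hw2
  exact wrp_ne (wrp_trans hw1 hw2) rfl

lemma inner_trans [Nonempty A] (hcyc : ∀ n : ℕ, 2 ≤ n → ¬ HasCycle (f ∘ f) n)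
    (hfix : ∀ u v : A, f u = u → f v = v → u = v) {x y z : A}
    (hsxy : side f x = side f y) (hsyz : side f y = side f z)
    (exy : Keq f x y) (eyz : Keq f y z)
    (h1 : Inner f x y) (h2 : Inner f y z) : Inner f x z := by
  have hmxy : ∃ N, f^[N] x = f^[N] y := merge_ex hcyc hfix (keq_com exy) hsxy exy.2.1
  have hmyz : ∃ N, f^[N] y = f^[N] z := merge_ex hcyc hfix (keq_com eyz) hsyz eyz.2.1
  have hmxz : ∃ N, f^[N] x = f^[N] z :=
    merge_ex hcyc hfix (keq_com (keq_trans exy eyz)) (hsxy.trans hsyz)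
      (exy.2.1.trans eyz.2.1)
  have hxz : x ≠ z := by
    rintro rfl
    exact inner_asym h2 h1
  obtain ⟨hnexy, hw1⟩ := h1
  obtain ⟨hneyz, hw2⟩ := h2
  rcases lt_trichotomy (mN f x y) (mN f y z) with hc | hc | hc
  · -- mN x z = mN y z, base of x at (mN y z)-1 equals base of y
    have hN2pos : 0 < mN f y z := mN_pos hmyz hneyz
    have hxy_at : f^[mN f y z - 1] x = f^[mN f y z - 1] y := merge_after hmxy (by omega)
    have hle : mN f x z ≤ mN f y z := by
      apply Nat.sInf_le
      show f^[mN f y z] x = f^[mN f y z] z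
      rw [merge_after hmxy (by omega), mN_mem hmyz]
    have hge : mN f y z ≤ mN f x z := by
      have hyz : f^[max (mN f x z) (mN f x y)] y = f^[max (mN f x z) (mN f x y)] z := by
        rw [← merge_after hmxy (le_max_right _ _)]
        exact merge_after hmxz (le_max_left _ _)
      have hK : mN f y z ≤ max (mN f x z) (mN f x y) := Nat.sInf_le hyz
      omega
    refine ⟨hxz, ?_⟩
    rw [show mN f x z = mN f y z by omega, hxy_at]
    exact hw2
  · -- equal merge times: bases compose
    have hN1pos : 0 < mN f x y := mN_pos hmxy hnexy
    have hw2' : WRp f (f^[mN f x y - 1] y) (f^[mN f x y - 1] z) := by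
      rw [hc]; exact hw2
    have hac : WRp f (f^[mN f x y - 1] x) (f^[mN f x y - 1] z) := wrp_trans hw1 hw2'
    have hle : mN f x z ≤ mN f x y := by
      apply Nat.sInf_le
      show f^[mN f x y] x = f^[mN f x y] z
      rw [mN_mem hmxy, hc, mN_mem hmyz]
    have hge : mN f x y ≤ mN f x z := by
      by_contra hlt
      push_neg at hlt
      have : f^[mN f x y - 1] x = f^[mN f x y - 1] z := merge_after hmxz (by omega)
      exact wrp_ne hac this
    refine ⟨hxz, ?_⟩
    rw [show mN f x z = mN f x y by omega]
    exact hac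
  · -- mN x z = mN x y, base of z at (mN x y)-1 equals base of y
    have hN1pos : 0 < mN f x y := mN_pos hmxy hnexy
    have hzy_at : f^[mN f x y - 1] z = f^[mN f x y - 1] y := (merge_after hmyz (by omega)).symm
    have hle : mN f x z ≤ mN f x y := by
      apply Nat.sInf_le
      show f^[mN f x y] x = f^[mN f x y] z
      rw [mN_mem hmxy, merge_after hmyz (by omega)]
    have hge : mN f x y ≤ mN f x z := by
      by_contra hlt
      push_neg at hlt
      have hxzat : f^[mN f x y - 1] x = f^[mN f x y - 1] z := merge_after hmxz (by omega)
      exact wrp_ne hw1 (hxzat.trans hzy_at)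
    refine ⟨hxz, ?_⟩
    rw [show mN f x z = mN f x y by omega, hzy_at]
    exact hw1

end ThmAux
end Chunk4

section Chunk5
namespace ThmAux

variable {A : Type*} {f : A → A}

attribute [local instance] Classical.propDecidable

lemma sc_irrefl {x : A} (h : SC f x x) : False := by
  rcases h with h | ⟨_, h⟩
  · exact klt_irrefl h
  · exact h.1 rfl

lemma sc_trans [Nonempty A] (hcyc : ∀ n : ℕ, 2 ≤ n → ¬ HasCycle (f ∘ f) n)
    (hfix : ∀ u v : A, f u = u → f v = v → u = v) {x y z : A}
    (hsxy : side f x = side f y) (hsyz : side f y = side f z)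
    (h1 : SC f x y) (h2 : SC f y z) : SC f x z := by
  rcases h1 with k1 | ⟨e1, i1⟩ <;> rcases h2 with k2 | ⟨e2, i2⟩
  · exact Or.inl (klt_trans k1 k2)
  · exact Or.inl ((klt_congr_r e2).mp k1)
  · exact Or.inl ((klt_congr_l (keq_symm e1)).mp k2)
  · exact Or.inr ⟨keq_trans e1 e2, inner_trans hcyc hfix hsxy hsyz e1 e2 i1 i2⟩

lemma sc_tri [Nonempty A] (hcyc : ∀ n : ℕ, 2 ≤ n → ¬ HasCycle (f ∘ f) n)
    (hfix : ∀ u v : A, f u = u → f v = v → u = v) {x y : A}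
    (hside : side f x = side f y) (hxy : x ≠ y) : SC f x y ∨ SC f y x := by
  rcases klt_tri hfix (f := f) x y with k | k | e
  · exact Or.inl (Or.inl k)
  · exact Or.inr (Or.inl k)
  · have hm := merge_ex hcyc hfix (keq_com e) hside e.2.1
    rcases inner_tri hfix hm hxy with i | i
    · exact Or.inl (Or.inr ⟨e, i⟩)
    · exact Or.inr (Or.inr ⟨keq_symm e, i⟩)

lemma ltF_irrefl [Nonempty A] (x : A) : ¬ ltF f x x := by
  rintro (⟨h1, h2⟩ | ⟨h1, h2, h3⟩ | ⟨h1, h2, h3⟩)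
  · rw [h1] at h2; simp at h2
  · exact sc_irrefl h3
  · exact sc_irrefl h3

lemma ltF_trans [Nonempty A] (hcyc : ∀ n : ℕ, 2 ≤ n → ¬ HasCycle (f ∘ f) n)
    (hfix : ∀ u v : A, f u = u → f v = v → u = v) {x y z : A}
    (h1 : ltF f x y) (h2 : ltF f y z) : ltF f x z := by
  rcases h1 with ⟨hx, hy⟩ | ⟨hx, hy, hs⟩ | ⟨hx, hy, hs⟩ <;>
    rcases h2 with ⟨hy', hz⟩ | ⟨hy', hz, hs'⟩ | ⟨hy', hz, hs'⟩
  · rw [hy] at hy'; simp at hy'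
  · rw [hy] at hy'; simp at hy'
  · exact Or.inl ⟨hx, hz⟩
  · exact Or.inl ⟨hx, hz⟩
  · exact Or.inr (Or.inl ⟨hx, hz, sc_trans hcyc hfix (hx.trans hy.symm)
      (hy'.trans hz.symm) hs hs'⟩)
  · rw [hy] at hy'; simp at hy'
  · rw [hy] at hy'; simp at hy'
  · rw [hy] at hy'; simp at hy'
  · exact Or.inr (Or.inr ⟨hx, hz, sc_trans hcyc hfix (hz.trans hy'.symm)
      (hy.trans hx.symm) hs' hs⟩)

lemma ltF_tri [Nonempty A] (hcyc : ∀ n : ℕ, 2 ≤ n → ¬ HasCycle (f ∘ f) n)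
    (hfix : ∀ u v : A, f u = u → f v = v → u = v) {x y : A}
    (hxy : x ≠ y) : ltF f x y ∨ ltF f y x := by
  cases hsx : side f x <;> cases hsy : side f y
  · rcases sc_tri hcyc hfix (hsx.trans hsy.symm) hxy with h | h
    · exact Or.inl (Or.inr (Or.inl ⟨hsx, hsy, h⟩))
    · exact Or.inr (Or.inr (Or.inl ⟨hsy, hsx, h⟩))
  · exact Or.inl (Or.inl ⟨hsx, hsy⟩)
  · exact Or.inr (Or.inl ⟨hsy, hsx⟩)
  · rcases sc_tri hcyc hfix (hsx.trans hsy.symm) hxy with h | h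
    · exact Or.inr (Or.inr (Or.inr ⟨hsy, hsx, h⟩))
    · exact Or.inl (Or.inr (Or.inr ⟨hsx, hsy, h⟩))

/- helper lemmas for antitonicity -/

lemma uc_f_iff {x : A} : UC f (f x) ↔ UC f x :=
  ⟨fun h => UC_com (com_symm (com_f_self x)) h, fun h => UC_com (com_f_self x) h⟩

lemma complt_f {x y : A} (h : CompLt f x y) : CompLt f (f x) (f y) := by
  rcases h with ⟨h1, h2⟩ | ⟨h1, h2, h3⟩
  · exact Or.inl ⟨fun hh => h1 (uc_f_iff.mp hh), uc_f_iff.mpr h2⟩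
  · refine Or.inr ⟨fun hh => h1 (uc_f_iff.mp hh), fun hh => h2 (uc_f_iff.mp hh), ?_⟩
    rw [bpt_f, bpt_f]; exact h3

/-- an element of side `false` which is not fixed never maps to a fixed point -/
lemma sideA [Nonempty A] (hcyc : ∀ n : ℕ, 2 ≤ n → ¬ HasCycle (f ∘ f) n)
    (hfix : ∀ u v : A, f u = u → f v = v → u = v) {x : A}
    (hx : side f x = false) (hxf : ¬ f x = x) : ¬ f (f x) = f x := by
  intro hffx
  have hUC : UC f x := ⟨f x, hffx, com_f_self x⟩
  have hxu : x ≠ ufix f := by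
    intro hxe
    apply hxf
    rw [hxe]
    exact ufix_fix ⟨f x, hffx⟩
  have hd1 : f^[1] x = ufix f := by
    simpa using eq_ufix hfix hffx
  have hle : dU f x ≤ 1 := Nat.sInf_le hd1
  have hpos : 0 < dU f x := dU_ufix_ne hfix hxu hUC
  have hdx : dU f x = 1 := by omega
  rw [side, if_pos hUC, hdx] at hx
  simp at hx

/-- rho comparison transfers through f -/
lemma rho_lt_f {x y : A} (hbe : bpt f x = bpt f y) (hr : rho f x < rho f y) :
    rho f (f x) < rho f (f y) := by
  by_cases hfr : Free f x
  · have hfry : Free f y := free_com (com_of_bpt_eq hbe) hfr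
    rw [rho_f hfr, rho_f hfry]; omega
  · exfalso
    have h1 : rho f x = 0 := rho_nonfree hfr
    have hfry : ¬ Free f y := fun hf => hfr (free_com (com_symm (com_of_bpt_eq hbe)) hf)
    have h2 : rho f y = 0 := rho_nonfree hfry
    omega

lemma rho_eq_f {x y : A} (hbe : bpt f x = bpt f y) (hr : rho f x = rho f y) :
    rho f (f x) = rho f (f y) := by
  by_cases hfr : Free f x
  · have hfry : Free f y := free_com (com_of_bpt_eq hbe) hfr
    rw [rho_f hfr, rho_f hfry, hr]
  · have hfrx' : ¬ Free f (f x) := fun hf => hfr (free_com (com_symm (com_f_self x)) hf)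
    have hfry : ¬ Free f y := fun hf => hfr (free_com (com_symm (com_of_bpt_eq hbe)) hf)
    have hfry' : ¬ Free f (f y) := fun hf => hfry (free_com (com_symm (com_f_self y)) hf)
    rw [rho_nonfree hfrx', rho_nonfree hfry']

/-- THE antitonicity lemma -/
lemma ltF_anti [Nonempty A] (hcyc : ∀ n : ℕ, 2 ≤ n → ¬ HasCycle (f ∘ f) n)
    (hfix : ∀ u v : A, f u = u → f v = v → u = v) {x y : A}
    (h : ltF f x y) : f y = f x ∨ ltF f (f y) (f x) := by
  by_cases hfe : f y = f x
  · exact Or.inl hfe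
  right
  rcases h with ⟨hx, hy⟩ | ⟨hx, hy, hs⟩ | ⟨hx, hy, hs⟩
  · -- CASE 1 : side x = false < side y = true
    have hyfix : ¬ f y = y := by
      intro h'; rw [side_fix hfix h'] at hy; simp at hy
    have hsfy : side f (f y) = false := by
      rw [side_f hcyc hfix hyfix, hy]; rfl
    by_cases hxfix : f x = x
    · -- x is the fixed point
      have hffy : ¬ f (f y) = f y := by
        intro h'
        exact hfe (hfix (f y) (f x) h' (by rw [hxfix]; exact hxfix))
      refine Or.inr (Or.inl ⟨hsfy, ?_, Or.inl (Or.inl ⟨hffy, ?_⟩)⟩)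
      · rw [hxfix]; exact hx
      · rw [hxfix]; exact hxfix
    · have hsfx : side f (f x) = true := by
        rw [side_f hcyc hfix hxfix, hx]; rfl
      exact Or.inl ⟨hsfy, hsfx⟩
  · -- CASE 2 : both sides false, SC x y
    rcases hs with hk | ⟨he, hi⟩
    · rcases hk with ⟨hxf, hyf⟩ | ⟨hxf, hyf, hcase⟩
      · -- y is the fixed point
        have hsfx : side f (f x) = true := by
          rw [side_f hcyc hfix hxf, hx]; rfl
        refine Or.inl ⟨?_, hsfx⟩
        rw [hyf]; exact hy
      · -- both unfixed
        have hffx : ¬ f (f x) = f x := sideA hcyc hfix hx hxf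
        have hffy : ¬ f (f y) = f y := sideA hcyc hfix hy hyf
        have hsfx : side f (f x) = true := by rw [side_f hcyc hfix hxf, hx]; rfl
        have hsfy : side f (f y) = true := by rw [side_f hcyc hfix hyf, hy]; rfl
        refine Or.inr (Or.inr ⟨hsfy, hsfx, Or.inl (Or.inr ⟨hffx, hffy, ?_⟩)⟩)
        rcases hcase with hc | ⟨hbe, hr⟩
        · exact Or.inl (complt_f hc)
        · refine Or.inr ⟨?_, rho_lt_f hbe hr⟩
          rw [bpt_f, bpt_f, hbe]
    · -- Keq ∧ Inner
      obtain ⟨hbe, hre, hfe'⟩ := he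
      obtain ⟨hne, hw⟩ := hi
      have hxf : ¬ f x = x := fun h' => hne (hfix x y h' (hfe'.mp h'))
      have hyf : ¬ f y = y := fun h' => hne (hfix x y (hfe'.mpr h') h')
      have hffx : ¬ f (f x) = f x := sideA hcyc hfix hx hxf
      have hffy : ¬ f (f y) = f y := sideA hcyc hfix hy hyf
      have hsfx : side f (f x) = true := by rw [side_f hcyc hfix hxf, hx]; rfl
      have hsfy : side f (f y) = true := by rw [side_f hcyc hfix hyf, hy]; rfl
      have hm : ∃ N, f^[N] x = f^[N] y :=
        merge_ex hcyc hfix (com_of_bpt_eq hbe) (hx.trans hy.symm) hre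
      have hfne : f x ≠ f y := fun h => hfe h.symm
      obtain ⟨hbf1, hbf2⟩ := base_f hm hne hfne
      refine Or.inr (Or.inr ⟨hsfy, hsfx, Or.inr ⟨?_, hfne, ?_⟩⟩)
      · exact ⟨by rw [bpt_f, bpt_f, hbe], rho_eq_f hbe hre, iff_of_false hffx hffy⟩
      · rw [hbf1, hbf2]
        exact hw
  · -- CASE 3 : both sides true, SC y x
    have hxf : ¬ f x = x := by
      intro h'; rw [side_fix hfix h'] at hx; simp at hx
    have hyf : ¬ f y = y := by
      intro h'; rw [side_fix hfix h'] at hy; simp at hy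
    have hsfx : side f (f x) = false := by rw [side_f hcyc hfix hxf, hx]; rfl
    have hsfy : side f (f y) = false := by rw [side_f hcyc hfix hyf, hy]; rfl
    refine Or.inr (Or.inl ⟨hsfy, hsfx, ?_⟩)
    by_cases hffx : f (f x) = f x
    · -- f x is the fixed point; f y cannot be fixed
      have hffy : ¬ f (f y) = f y := fun h' => hfe (hfix (f y) (f x) h' hffx)
      exact Or.inl (Or.inl ⟨hffy, hffx⟩)
    · rcases hs with hk | ⟨he, hi⟩
      · rcases hk with ⟨hyf', hxf'⟩ | ⟨hyf', hxf', hcase⟩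
        · exact absurd hxf' hxf
        · -- show f y unfixed, then use Klt transfer
          have hffy : ¬ f (f y) = f y := by
            intro h'
            have hUCy : UC f y := ⟨f y, h', com_f_self y⟩
            rcases hcase with hc | ⟨hbe, hr⟩
            · rcases hc with ⟨h1, _⟩ | ⟨h1, _, _⟩
              · exact h1 hUCy
              · exact h1 hUCy
            · by_cases hfr : Free f y
              · exact hfr ⟨f y, ⟨1, one_pos, by simpa using h'⟩, com_f_self y⟩
              · have h1 : rho f y = 0 := rho_nonfree hfr
                have hfrx : ¬ Free f x :=
                  fun hf => hfr (free_com (com_symm (com_of_bpt_eq hbe)) hf)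
                have h2 : rho f x = 0 := rho_nonfree hfrx
                omega
          refine Or.inl (Or.inr ⟨hffy, hffx, ?_⟩)
          rcases hcase with hc | ⟨hbe, hr⟩
          · exact Or.inl (complt_f hc)
          · refine Or.inr ⟨?_, rho_lt_f hbe hr⟩
            rw [bpt_f, bpt_f, hbe]
      · -- Keq y x with Inner y x
        obtain ⟨hbe, hre, hfe'⟩ := he
        obtain ⟨hne, hw⟩ := hi
        have hm : ∃ N, f^[N] y = f^[N] x :=
          merge_ex hcyc hfix (com_of_bpt_eq hbe) (hy.trans hx.symm) hre
        have hfne : f y ≠ f x := hfe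
        have h2N : 2 ≤ mN f y x := mN_two hm hne hfne
        by_cases hffy : f (f y) = f y
        · -- impossible: the base of y would be the fixed point
          exfalso
          have hbase : f^[mN f y x - 1] y = f y := by
            rw [show mN f y x - 1 = (mN f y x - 2) + 1 by omega,
              Function.iterate_succ_apply, fix_iter hffy]
          exact hw.1 (by rw [hbase]; exact hffy)
        · obtain ⟨hbf1, hbf2⟩ := base_f hm hne hfne
          refine Or.inr ⟨?_, hfne, ?_⟩
          · exact ⟨by rw [bpt_f, bpt_f, hbe], rho_eq_f hbe hre, iff_of_false hffy hffx⟩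
          · rw [hbf1, hbf2]
            exact hw

end ThmAux
end Chunk5

/-- **Theorem 3.7.** If `f²` has no proper cycle and `f` has at
most one fixed point, then there is a distributive lattice structure on `A`
making `f` a lattice anti-endomorphism. -/
theorem exists_distribLattice_antiEndo {A : Type*} (f : A → A)
    (hcyc : ∀ n : ℕ, 2 ≤ n → ¬ HasCycle (f ∘ f) n)
    (hfix : ∀ u v : A, f u = u → f v = v → u = v) :
    ∃ inst : DistribLattice A,
      @IsLatAntiEndo A (@DistribLattice.toLattice A inst) f := by
  classical
  have key : ∃ _inst : LinearOrder A, ∀ x y : A, x ≤ y → f y ≤ f x := by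
    rcases isEmpty_or_nonempty A with hA | hA
    · haveI : IsTrichotomous A (fun _ _ : A => False) := ⟨fun a => isEmptyElim a⟩
      haveI : IsTrans A (fun _ _ : A => False) := ⟨fun a => isEmptyElim a⟩
      haveI : IsIrrefl A (fun _ _ : A => False) := ⟨fun a => isEmptyElim a⟩
      haveI : IsStrictTotalOrder A (fun _ _ : A => False) := {}
      haveI : DecidableRel (fun _ _ : A => False) := fun _ _ =>
        (inferInstance : Decidable False)
      letI LO : LinearOrder A := linearOrderOfSTO (fun _ _ : A => False)
      exact ⟨LO, fun x => isEmptyElim x⟩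
    · haveI := hA
      haveI : IsTrichotomous A (ThmAux.ltF f) := ⟨fun a b => by
        rcases eq_or_ne a b with h | h
        · exact fun _ _ => h
        · rcases ThmAux.ltF_tri hcyc hfix h with h' | h'
          · exact fun hab _ => absurd h' hab
          · exact fun _ hba => absurd h' hba⟩
      haveI : IsTrans A (ThmAux.ltF f) :=
        ⟨fun _ _ _ h1 h2 => ThmAux.ltF_trans hcyc hfix h1 h2⟩
      haveI : IsIrrefl A (ThmAux.ltF f) := ⟨fun a => ThmAux.ltF_irrefl a⟩
      haveI : IsStrictTotalOrder A (ThmAux.ltF f) := {}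
      haveI : DecidableRel (ThmAux.ltF f) := fun _ _ => Classical.propDecidable _
      letI LO : LinearOrder A := linearOrderOfSTO (ThmAux.ltF f)
      refine ⟨LO, ?_⟩
      intro x y hxy
      rcases lt_or_eq_of_le hxy with hlt | heq
      · have hl : ThmAux.ltF f x y := hlt
        rcases ThmAux.ltF_anti hcyc hfix hl with h | h
        · exact le_of_eq h
        · exact le_of_lt (show f y < f x from h)
      · rw [heq]
  obtain ⟨inst, hanti⟩ := key
  letI := inst
  refine ⟨inferInstance, ?_⟩
  intro x y
  rcases le_total x y with h | h
  · constructor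
    · rw [sup_eq_right.mpr h, inf_eq_right.mpr (hanti x y h)]
    · rw [inf_eq_left.mpr h, sup_eq_left.mpr (hanti x y h)]
  · constructor
    · rw [sup_eq_left.mpr h, inf_eq_left.mpr (hanti y x h)]
    · rw [inf_eq_right.mpr h, sup_eq_right.mpr (hanti y x h)]
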